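/- The Kondratiev–Kuna convolution is associative: for functions f, g, h on finite configurations, (f ⋆ g) ⋆ h = f ⋆ (g ⋆ h). -/
import Mathlib


open Finset

/-- Kondratiev–Kuna convolution of functions on finite configurations. -/
noncomputable def kkConv {X : Type*} [DecidableEq X] (f g : Finset X → ℂ) (ξ : Finset X) : ℂ :=
  ∑ A ∈ ξ.powerset, ∑ B ∈ ξ.powerset, if A ∪ B = ξ then f A * g B else 0

private lemma kkConv_eq_of_subset {X : Type*} [DecidableEq X] (u v : Finset X → ℂ)
    {D ξ : Finset X} (hD : D ⊆ ξ) :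
    kkConv u v D = ∑ A ∈ ξ.powerset, ∑ B ∈ ξ.powerset,
      if A ∪ B = D then u A * v B else 0 := by
  unfold kkConv
  rw [Finset.sum_subset (Finset.powerset_mono.2 hD)]
  · refine Finset.sum_congr rfl fun A _ => ?_
    rw [Finset.sum_subset (Finset.powerset_mono.2 hD)]
    intro B _ hB
    rw [Finset.mem_powerset] at hB
    rw [if_neg]
    intro hAB
    exact hB (hAB ▸ Finset.subset_union_right)
  · intro A _ hA
    rw [Finset.mem_powerset] at hA
    refine Finset.sum_eq_zero fun B _ => ?_
    rw [if_neg]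
    intro hAB
    exact hA (hAB ▸ Finset.subset_union_left)

theorem kkConv_assoc {X : Type*} [DecidableEq X] (f g h : Finset X → ℂ) :
    kkConv (kkConv f g) h = kkConv f (kkConv g h) := by
  funext ξ
  set s := ξ.powerset with hs
  have lhs_eq : kkConv (kkConv f g) h ξ
      = ∑ A ∈ s, ∑ B ∈ s, ∑ C ∈ s,
          if (A ∪ B) ∪ C = ξ then f A * g B * h C else 0 := by
    calc kkConv (kkConv f g) h ξ
        = ∑ D ∈ s, ∑ C ∈ s, if D ∪ C = ξ then
            (∑ A ∈ s, ∑ B ∈ s, if A ∪ B = D then f A * g B else 0) * h C else 0 := by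
          show (∑ D ∈ s, ∑ C ∈ s, if D ∪ C = ξ then kkConv f g D * h C else 0) = _
          refine Finset.sum_congr rfl fun D hD => Finset.sum_congr rfl fun C _ => ?_
          rw [kkConv_eq_of_subset f g (Finset.mem_powerset.1 hD)]
      _ = ∑ D ∈ s, ∑ C ∈ s, ∑ A ∈ s, ∑ B ∈ s,
            if A ∪ B = D ∧ D ∪ C = ξ then f A * g B * h C else 0 := by
          refine Finset.sum_congr rfl fun D _ => Finset.sum_congr rfl fun C _ => ?_
          split_ifs with hDC
          · rw [Finset.sum_mul]
            refine Finset.sum_congr rfl fun A _ => ?_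
            rw [Finset.sum_mul]
            refine Finset.sum_congr rfl fun B _ => ?_
            simp [ite_mul, hDC, mul_assoc]
          · exact (Finset.sum_eq_zero fun A _ => Finset.sum_eq_zero fun B _ => by
              simp [hDC]).symm
      _ = ∑ C ∈ s, ∑ D ∈ s, ∑ A ∈ s, ∑ B ∈ s,
            if A ∪ B = D ∧ D ∪ C = ξ then f A * g B * h C else 0 := Finset.sum_comm
      _ = ∑ C ∈ s, ∑ A ∈ s, ∑ D ∈ s, ∑ B ∈ s,
            if A ∪ B = D ∧ D ∪ C = ξ then f A * g B * h C else 0 :=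
          Finset.sum_congr rfl fun C _ => Finset.sum_comm
      _ = ∑ C ∈ s, ∑ A ∈ s, ∑ B ∈ s, ∑ D ∈ s,
            if A ∪ B = D ∧ D ∪ C = ξ then f A * g B * h C else 0 :=
          Finset.sum_congr rfl fun C _ => Finset.sum_congr rfl fun A _ => Finset.sum_comm
      _ = ∑ A ∈ s, ∑ C ∈ s, ∑ B ∈ s, ∑ D ∈ s,
            if A ∪ B = D ∧ D ∪ C = ξ then f A * g B * h C else 0 := Finset.sum_comm
      _ = ∑ A ∈ s, ∑ B ∈ s, ∑ C ∈ s, ∑ D ∈ s,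
            if A ∪ B = D ∧ D ∪ C = ξ then f A * g B * h C else 0 :=
          Finset.sum_congr rfl fun A _ => Finset.sum_comm
      _ = ∑ A ∈ s, ∑ B ∈ s, ∑ C ∈ s,
            if (A ∪ B) ∪ C = ξ then f A * g B * h C else 0 := by
          refine Finset.sum_congr rfl fun A hA => Finset.sum_congr rfl fun B hB =>
            Finset.sum_congr rfl fun C _ => ?_
          rw [Finset.mem_powerset] at hA hB
          have hmem : A ∪ B ∈ s := Finset.mem_powerset.2 (Finset.union_subset hA hB)
          simp only [ite_and]
          rw [Finset.sum_ite_eq s (A ∪ B) (fun D => if D ∪ C = ξ then f A * g B * h C else 0)]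
          simp [hmem]
  have rhs_eq : kkConv f (kkConv g h) ξ
      = ∑ A ∈ s, ∑ B ∈ s, ∑ C ∈ s,
          if A ∪ (B ∪ C) = ξ then f A * (g B * h C) else 0 := by
    calc kkConv f (kkConv g h) ξ
        = ∑ A ∈ s, ∑ D ∈ s, if A ∪ D = ξ then
            f A * (∑ B ∈ s, ∑ C ∈ s, if B ∪ C = D then g B * h C else 0) else 0 := by
          show (∑ A ∈ s, ∑ D ∈ s, if A ∪ D = ξ then f A * kkConv g h D else 0) = _
          refine Finset.sum_congr rfl fun A _ => Finset.sum_congr rfl fun D hD => ?_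
          rw [kkConv_eq_of_subset g h (Finset.mem_powerset.1 hD)]
      _ = ∑ A ∈ s, ∑ D ∈ s, ∑ B ∈ s, ∑ C ∈ s,
            if B ∪ C = D ∧ A ∪ D = ξ then f A * (g B * h C) else 0 := by
          refine Finset.sum_congr rfl fun A _ => Finset.sum_congr rfl fun D _ => ?_
          split_ifs with hAD
          · rw [Finset.mul_sum]
            refine Finset.sum_congr rfl fun B _ => ?_
            rw [Finset.mul_sum]
            refine Finset.sum_congr rfl fun C _ => ?_
            simp [mul_ite, hAD]
          · exact (Finset.sum_eq_zero fun B _ => Finset.sum_eq_zero fun C _ => by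
              simp [hAD]).symm
      _ = ∑ A ∈ s, ∑ B ∈ s, ∑ D ∈ s, ∑ C ∈ s,
            if B ∪ C = D ∧ A ∪ D = ξ then f A * (g B * h C) else 0 :=
          Finset.sum_congr rfl fun A _ => Finset.sum_comm
      _ = ∑ A ∈ s, ∑ B ∈ s, ∑ C ∈ s, ∑ D ∈ s,
            if B ∪ C = D ∧ A ∪ D = ξ then f A * (g B * h C) else 0 :=
          Finset.sum_congr rfl fun A _ => Finset.sum_congr rfl fun B _ => Finset.sum_comm
      _ = ∑ A ∈ s, ∑ B ∈ s, ∑ C ∈ s,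
            if A ∪ (B ∪ C) = ξ then f A * (g B * h C) else 0 := by
          refine Finset.sum_congr rfl fun A _ => Finset.sum_congr rfl fun B hB =>
            Finset.sum_congr rfl fun C hC => ?_
          rw [Finset.mem_powerset] at hB hC
          have hmem : B ∪ C ∈ s := Finset.mem_powerset.2 (Finset.union_subset hB hC)
          simp only [ite_and]
          rw [Finset.sum_ite_eq s (B ∪ C) (fun D => if A ∪ D = ξ then f A * (g B * h C) else 0)]
          simp [hmem]
  rw [lhs_eq, rhs_eq]
  refine Finset.sum_congr rfl fun A _ => Finset.sum_congr rfl fun B _ =>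
    Finset.sum_congr rfl fun C _ => ?_
  rw [Finset.union_assoc, mul_assoc]
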